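/- arXiv:1908.03724 — 2 statements merged into one kernel-verified Lean document; each statement's English description precedes it below -/
import Mathlib

section
/- Let B = (b_1, …, b_n) ∈ ℝ^{m×n} be a basis, let β ≥ 1, and let 1 ≤ d < n. If B_{[d+1,n]} is β-SVP-reduced and λ_1(L(B)) < λ_1(L(B_{[1,d]})), then ‖b*_{d+1}‖ ≤ β·λ_1(L(B)). -/
noncomputable section

/-- Euclidean space `ℝ^m`. -/
abbrev Euc (m : ℕ) : Type := EuclideanSpace ℝ (Fin m)

variable {m : ℕ}

/-- `projGS B s` is the orthogonal projection `π_{s+1}` onto the subspace orthogonal to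
`b_1, …, b_s` (0-based: orthogonal to `B 0, …, B (s-1)`). -/
def projGS (B : ℕ → Euc m) (s : ℕ) (x : Euc m) : Euc m :=
  (Submodule.orthogonalProjectionOnto ((Submodule.span ℝ (B '' Set.Iio s))ᗮ) x : Euc m)

/-- The Gram–Schmidt vector `b*_{i+1}` (0-based index `i`). -/
def gsoVec (B : ℕ → Euc m) (i : ℕ) : Euc m := projGS B i (B i)

/-- The projected block `B_{[s+1, s+ℓ]}` (0-based start `s`; the length is supplied
separately to the predicates below). -/
def block (B : ℕ → Euc m) (s : ℕ) : ℕ → Euc m := fun t => projGS B s (B (s + t))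

/-- Gram matrix of the first `ℓ` vectors. -/
def gram (B : ℕ → Euc m) (ℓ : ℕ) : Matrix (Fin ℓ) (Fin ℓ) ℝ :=
  Matrix.of fun i j => (inner ℝ (B i) (B j) : ℝ)

/-- `vol(L(B)) = det(BᵀB)^{1/2}` for the first `ℓ` vectors. -/
def volB (B : ℕ → Euc m) (ℓ : ℕ) : ℝ := Real.sqrt (gram B ℓ).det

/-- The lattice generated by the first `ℓ` vectors. -/
def latticeSpan (B : ℕ → Euc m) (ℓ : ℕ) : Submodule ℤ (Euc m) :=
  Submodule.span ℤ (B '' Set.Iio ℓ)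

/-- `λ₁(L)`: the minimum norm of a nonzero lattice vector. -/
def lambda1 (L : Submodule ℤ (Euc m)) : ℝ :=
  sInf {r : ℝ | ∃ x ∈ L, x ≠ 0 ∧ ‖x‖ = r}

/-- `B` (of rank `ℓ`) is `δ`-SVP-reduced. -/
def SVPReduced (δ : ℝ) (B : ℕ → Euc m) (ℓ : ℕ) : Prop :=
  ‖B 0‖ ≤ δ * lambda1 (latticeSpan B ℓ)

/-- `B` (of rank `ℓ`) is `δ`-HSVP-reduced. -/
def HSVPReduced (δ : ℝ) (B : ℕ → Euc m) (ℓ : ℕ) : Prop :=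
  ‖B 0‖ ≤ δ * volB B ℓ ^ ((1 : ℝ) / ℓ)

/-- The dual basis `B^× = B (BᵀB)⁻¹` of the first `ℓ` vectors (extended by `0`). -/
def dualFam (B : ℕ → Euc m) (ℓ : ℕ) : ℕ → Euc m := fun i =>
  if h : i < ℓ then ∑ j : Fin ℓ, ((gram B ℓ)⁻¹ j ⟨i, h⟩) • B j else 0

/-- The reversed dual basis `B^{-s}`. -/
def revDual (B : ℕ → Euc m) (ℓ : ℕ) : ℕ → Euc m := fun i => dualFam B ℓ (ℓ - 1 - i)

/-- `B` (of rank `ℓ`) is `δ`-DHSVP-reduced: its reversed dual basis is `δ`-HSVP-reduced. -/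
def DHSVPReduced (δ : ℝ) (B : ℕ → Euc m) (ℓ : ℕ) : Prop :=
  HSVPReduced δ (revDual B ℓ) ℓ

/-- `B = (b_1, …, b_{d+1})` is `δ`-twin-reduced: `B_{[1,d]}` is `δ`-HSVP-reduced and
`B_{[2,d+1]}` is `δ`-DHSVP-reduced. -/
def TwinReduced (δ : ℝ) (B : ℕ → Euc m) (d : ℕ) : Prop :=
  HSVPReduced δ (block B 0) d ∧ DHSVPReduced δ (block B 1) d

/-- Gram–Schmidt coefficient `μ_{i,j}` (0-based). -/
def mu (B : ℕ → Euc m) (i j : ℕ) : ℝ :=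
  (inner ℝ (B i) (gsoVec B j) : ℝ) / ‖gsoVec B j‖ ^ 2

/-- The first `ℓ` vectors are size-reduced. -/
def SizeReduced (B : ℕ → Euc m) (ℓ : ℕ) : Prop :=
  ∀ i j, j < i → i < ℓ → |mu B i j| ≤ 1 / 2

/-- The first `ℓ` vectors are `ε`-LLL-reduced. -/
def LLLReduced (ε : ℝ) (B : ℕ → Euc m) (ℓ : ℕ) : Prop :=
  SizeReduced B ℓ ∧
    ∀ i, 0 < i → i < ℓ →
      ‖gsoVec B (i - 1)‖ ^ 2 ≤ (1 + ε) * ‖mu B i (i - 1) • gsoVec B (i - 1) + gsoVec B i‖ ^ 2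

/-- `B` (of rank `ℓ`) is `δ`-DSVP-reduced: its reversed dual basis is `δ`-SVP-reduced
and `B` is `(1/3)`-LLL-reduced. -/
def DSVPReduced (δ : ℝ) (B : ℕ → Euc m) (ℓ : ℕ) : Prop :=
  SVPReduced δ (revDual B ℓ) ℓ ∧ LLLReduced (1 / 3) B ℓ

/-- `γ` is an admissible Hermite bound for rank `r`: every lattice generated by `r`
linearly independent vectors of a Euclidean space satisfies `λ₁² ≤ γ · vol^{2/r}`. -/
def IsHermiteBound (γ : ℝ) (r : ℕ) : Prop :=
  ∀ (m' : ℕ) (v : ℕ → Euc m'), LinearIndependent ℝ (fun i : Fin r => v i) →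
    lambda1 (latticeSpan v r) ^ 2 ≤ γ * volB v r ^ ((2 : ℝ) / r)


lemma image_Iio_eq_range' (B : ℕ → Euc m) (k : ℕ) :
    B '' Set.Iio k = Set.range (fun i : Fin k => B i) := by
  ext x
  constructor
  · rintro ⟨j, hj, rfl⟩; exact ⟨⟨j, hj⟩, rfl⟩
  · rintro ⟨i, rfl⟩; exact ⟨i, i.2, rfl⟩

lemma projGS_zero_left (B : ℕ → Euc m) (x : Euc m) : projGS B 0 x = x := by
  unfold projGS
  have h : Submodule.span ℝ (B '' Set.Iio 0) = ⊥ := by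
    rw [show Set.Iio 0 = (∅ : Set ℕ) by ext x; simp]
    simp
  exact Submodule.starProjection_eq_self_iff.2 (by rw [h, Submodule.bot_orthogonal_eq_top]; trivial)

lemma projGS_add (B : ℕ → Euc m) (s : ℕ) (x y : Euc m) :
    projGS B s (x + y) = projGS B s x + projGS B s y := by
  simp [projGS]

lemma projGS_zero (B : ℕ → Euc m) (s : ℕ) : projGS B s 0 = 0 := by
  simp [projGS]

lemma projGS_zsmul (B : ℕ → Euc m) (s : ℕ) (z : ℤ) (x : Euc m) :
    projGS B s (z • x) = z • projGS B s x := by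
  have h : z • x = (z : ℝ) • x := (Int.cast_smul_eq_zsmul ℝ z x).symm
  rw [h, projGS, map_smul]
  simp [projGS, Int.cast_smul_eq_zsmul]

lemma norm_projGS_le (B : ℕ → Euc m) (s : ℕ) (x : Euc m) : ‖projGS B s x‖ ≤ ‖x‖ := by
  set S := (Submodule.span ℝ (B '' Set.Iio s))ᗮ with hS
  have h := Submodule.norm_sq_eq_add_norm_sq_projection x S
  have h1 : ‖projGS B s x‖ = ‖Submodule.orthogonalProjectionOnto S x‖ := rfl
  have h2 : (0:ℝ) ≤ ‖Submodule.orthogonalProjectionOnto Sᗮ x‖ ^ 2 := sq_nonneg _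
  have h3 : ‖Submodule.orthogonalProjectionOnto S x‖ ^ 2 ≤ ‖x‖ ^ 2 := by linarith
  rw [h1]
  exact (pow_le_pow_iff_left₀ (norm_nonneg _) (norm_nonneg _) two_ne_zero).1 h3

lemma projGS_eq_zero_of_lt (B : ℕ → Euc m) {i s : ℕ} (h : i < s) : projGS B s (B i) = 0 := by
  have hm : B i ∈ Submodule.span ℝ (B '' Set.Iio s) := Submodule.subset_span ⟨i, h, rfl⟩
  have h0 := Submodule.orthogonalProjectionOnto_apply_of_mem_orthogonal
    ((Submodule.span ℝ (B '' Set.Iio s)).le_orthogonal_orthogonal hm)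
  simp [projGS, h0]

lemma mem_realspan_of_projGS_eq_zero (B : ℕ → Euc m) {s : ℕ} {v : Euc m}
    (h : projGS B s v = 0) : v ∈ Submodule.span ℝ (B '' Set.Iio s) := by
  set K := Submodule.span ℝ (B '' Set.Iio s) with hK
  have h2 : v - (Submodule.orthogonalProjectionOnto Kᗮ v : Euc m) ∈ Kᗮᗮ :=
    Submodule.sub_starProjection_mem_orthogonal (K := Kᗮ) v
  have h3 : (Submodule.orthogonalProjectionOnto Kᗮ v : Euc m) = 0 := h
  rw [h3, sub_zero] at h2
  rwa [Submodule.orthogonal_orthogonal] at h2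

lemma mem_latticeSpan_of_mem_realspan {n d : ℕ} (hdn : d ≤ n) (B : ℕ → Euc m)
    (hB : LinearIndependent ℝ (fun i : Fin n => B i))
    {v : Euc m} (hv : v ∈ latticeSpan B n) (hvr : v ∈ Submodule.span ℝ (B '' Set.Iio d)) :
    v ∈ latticeSpan B d := by
  classical
  have hv' : v ∈ Submodule.span ℤ (Set.range fun i : Fin n => B i) := by
    rwa [latticeSpan, image_Iio_eq_range'] at hv
  obtain ⟨c, rfl⟩ := (Submodule.mem_span_range_iff_exists_fun ℤ).1 hv'
  set s : Set (Fin n) := {i | (i : ℕ) < d} with hs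
  have himg_s : (fun i : Fin n => B i) '' s = B '' Set.Iio d := by
    ext x
    constructor
    · rintro ⟨i, hi, rfl⟩; exact ⟨i, hi, rfl⟩
    · rintro ⟨j, hj, rfl⟩; exact ⟨⟨j, lt_of_lt_of_le hj hdn⟩, hj, rfl⟩
  set v₁ := ∑ i ∈ Finset.univ.filter (fun i : Fin n => (i : ℕ) < d), c i • B i with hv₁def
  set v₂ := ∑ i ∈ Finset.univ.filter (fun i : Fin n => ¬(i : ℕ) < d), c i • B i with hv₂def
  have hsplit : (∑ i : Fin n, c i • B i) = v₁ + v₂ :=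
    (Finset.sum_filter_add_sum_filter_not _ _ _).symm
  have hv₁mem : v₁ ∈ latticeSpan B d :=
    Submodule.sum_mem _ fun i hi =>
      Submodule.smul_mem _ _ (Submodule.subset_span ⟨i, (Finset.mem_filter.1 hi).2, rfl⟩)
  have hv₁r : v₁ ∈ Submodule.span ℝ ((fun i : Fin n => B i) '' s) :=
    Submodule.sum_mem _ fun i hi => by
      rw [← Int.cast_smul_eq_zsmul ℝ]
      exact Submodule.smul_mem _ _ (Submodule.subset_span ⟨i, (Finset.mem_filter.1 hi).2, rfl⟩)
  have hv₂r : v₂ ∈ Submodule.span ℝ ((fun i : Fin n => B i) '' sᶜ) :=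
    Submodule.sum_mem _ fun i hi => by
      rw [← Int.cast_smul_eq_zsmul ℝ]
      exact Submodule.smul_mem _ _ (Submodule.subset_span ⟨i, (Finset.mem_filter.1 hi).2, rfl⟩)
  have hdisj := hB.disjoint_span_image (s := s) (t := sᶜ) disjoint_compl_right
  have hv₂0 : v₂ = 0 := by
    have h1 : v₂ ∈ Submodule.span ℝ ((fun i : Fin n => B i) '' s) := by
      have he : v₂ = (∑ i : Fin n, c i • B i) - v₁ := by rw [hsplit]; abel
      rw [he]
      exact Submodule.sub_mem _ (by rwa [himg_s]) hv₁r
    exact Submodule.disjoint_def.1 hdisj v₂ h1 hv₂r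
  rw [hsplit, hv₂0, add_zero]
  exact hv₁mem

/-- if `B_{[d+1,n]}` is `β`-SVP-reduced and `λ₁(L(B)) < λ₁(L(B_{[1,d]}))`,
then `‖b*_{d+1}‖ ≤ β λ₁(L(B))`. -/
theorem gso_le_of_svp_block {m n d : ℕ} (hd1 : 1 ≤ d) (hdn : d < n) {β : ℝ} (hβ : 1 ≤ β)
    (B : ℕ → Euc m) (hB : LinearIndependent ℝ (fun i : Fin n => B i))
    (hblock : SVPReduced β (block B d) (n - d))
    (hgap : lambda1 (latticeSpan B n) < lambda1 (latticeSpan (block B 0) d)) :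
    ‖gsoVec B d‖ ≤ β * lambda1 (latticeSpan B n) := by
  classical
  have hblk0 : block B 0 = B := by
    funext t
    simp [block, projGS_zero_left]
  rw [hblk0] at hgap
  set S : Set ℝ := {r : ℝ | ∃ x ∈ latticeSpan B n, x ≠ 0 ∧ ‖x‖ = r} with hSdef
  have hSbdd : BddBelow S := ⟨0, by rintro r ⟨x, -, -, rfl⟩; positivity⟩
  have hB0ne : B 0 ≠ 0 := by
    have h := hB.ne_zero ⟨0, lt_of_le_of_lt (Nat.zero_le d) hdn⟩
    simpa using h
  have hSne : S.Nonempty :=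
    ⟨‖B 0‖, B 0, Submodule.subset_span ⟨0, lt_of_le_of_lt (Nat.zero_le d) hdn, rfl⟩, hB0ne, rfl⟩
  have hLd_lb : ∀ x ∈ latticeSpan B d, x ≠ 0 → lambda1 (latticeSpan B d) ≤ ‖x‖ := by
    intro x hx hx0
    exact csInf_le ⟨0, by rintro r ⟨y, -, -, rfl⟩; positivity⟩ ⟨x, hx, hx0, rfl⟩
  -- projection of lattice vectors lands in the block lattice
  have hπmem : ∀ x ∈ latticeSpan B n, projGS B d x ∈ latticeSpan (block B d) (n - d) := by
    intro x hx
    refine Submodule.span_induction ?_ ?_ ?_ ?_ hx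
    · rintro y ⟨j, hj, rfl⟩
      have hj' : j < n := hj
      by_cases hjd : j < d
      · rw [projGS_eq_zero_of_lt B hjd]
        exact Submodule.zero_mem _
      · apply Submodule.subset_span
        refine ⟨j - d, by simpa using (by omega : j - d < n - d), ?_⟩
        show projGS B d (B (d + (j - d))) = projGS B d (B j)
        have hdj : d + (j - d) = j := by omega
        rw [hdj]
    · simpa using (by rw [projGS_zero]; exact Submodule.zero_mem _ :
        projGS B d 0 ∈ latticeSpan (block B d) (n - d))
    · intro a b _ _ ha hb
      rw [projGS_add]
      exact Submodule.add_mem _ ha hb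
    · intro z a _ ha
      rw [projGS_zsmul]
      exact Submodule.smul_mem _ z ha
  have hkey : lambda1 (latticeSpan (block B d) (n - d)) ≤ lambda1 (latticeSpan B n) := by
    apply le_of_forall_pos_le_add
    intro ε hε
    set ε' := min ε (lambda1 (latticeSpan B d) - lambda1 (latticeSpan B n)) with hε'def
    have hε' : 0 < ε' := lt_min hε (by linarith)
    obtain ⟨r, ⟨v, hvL, hv0, rfl⟩, hr⟩ := Real.lt_sInf_add_pos hSne hε'
    refine le_of_lt ?_
    have hrlam : ‖v‖ < lambda1 (latticeSpan B n) + ε' := hr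
    have hvlt : ‖v‖ < lambda1 (latticeSpan B d) := by
      have := min_le_right ε (lambda1 (latticeSpan B d) - lambda1 (latticeSpan B n))
      calc ‖v‖ < lambda1 (latticeSpan B n) + ε' := hrlam
        _ ≤ lambda1 (latticeSpan B d) := by rw [hε'def]; linarith
    have hπ0 : projGS B d v ≠ 0 := by
      intro h0
      have hvr := mem_realspan_of_projGS_eq_zero B h0
      have hvd := mem_latticeSpan_of_mem_realspan hdn.le B hB hvL hvr
      exact absurd (hLd_lb v hvd hv0) (not_le.2 hvlt)
    have h1 : lambda1 (latticeSpan (block B d) (n - d)) ≤ ‖projGS B d v‖ :=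
      csInf_le ⟨0, by rintro r ⟨y, -, -, rfl⟩; positivity⟩ ⟨projGS B d v, hπmem v hvL, hπ0, rfl⟩
    calc lambda1 (latticeSpan (block B d) (n - d)) ≤ ‖projGS B d v‖ := h1
      _ ≤ ‖v‖ := norm_projGS_le B d v
      _ < lambda1 (latticeSpan B n) + ε' := hrlam
      _ ≤ lambda1 (latticeSpan B n) + ε := by
          have := min_le_left ε (lambda1 (latticeSpan B d) - lambda1 (latticeSpan B n))
          rw [hε'def]; linarith
  have hgso : gsoVec B d = block B d 0 := by
    show projGS B d (B d) = projGS B d (B (d + 0))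
    norm_num
  calc ‖gsoVec B d‖ = ‖block B d 0‖ := by rw [hgso]
    _ ≤ β * lambda1 (latticeSpan (block B d) (n - d)) := hblock
    _ ≤ β * lambda1 (latticeSpan B n) := by
        apply mul_le_mul_of_nonneg_left hkey (by linarith)


end
end

section
/- Let n = pk + q with p, k ≥ 2 and 0 ≤ q ≤ k−1 (so n ≥ 2k), let δ ≥ 1, and let γ_k ≥ 1 be an admissible Hermite bound for rank k. If B = (b_1, …, b_n) ∈ ℝ^{m×n} is a (δ,k)-slide-reduced (for n ≥ 2k) basis of a lattice L of rank n, then ‖b_1‖ ≤ (δ²γ_k)^{(n−1)/(2(k−1))} · vol(L)^{1/n}. -/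
noncomputable section

variable {m : ℕ}

/-- Slide reduction for `n = pk + q ≥ 2k` (`p, k ≥ 2`, `0 ≤ q ≤ k-1`): with
`η := (δ²γ_k)^{(k+q-1)/(2(k-1))}`, the basis `B` is `(δ,k)`-slide-reduced if it is
size-reduced, `B_{[1,k+q]}` is `η`-HSVP-reduced, `B_{[2,k+q+1]}` is `η`-DHSVP-reduced,
`B_{[ik+q+1,(i+1)k+q]}` is `δ`-SVP-reduced for `i ∈ [1,p-1]`, and
`B_{[ik+q+2,(i+1)k+q+1]}` is `δ`-DSVP-reduced for `i ∈ [1,p-2]`. -/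
def SlideReducedBig {m : ℕ} (δ γk : ℝ) (k q p : ℕ) (B : ℕ → Euc m) : Prop :=
  SizeReduced B (p * k + q) ∧
    HSVPReduced ((δ ^ 2 * γk) ^ (((k : ℝ) + q - 1) / (2 * ((k : ℝ) - 1)))) (block B 0) (k + q) ∧
    DHSVPReduced ((δ ^ 2 * γk) ^ (((k : ℝ) + q - 1) / (2 * ((k : ℝ) - 1)))) (block B 1) (k + q) ∧
    (∀ i, 1 ≤ i → i ≤ p - 1 → SVPReduced δ (block B (i * k + q)) k) ∧
    (∀ i, 1 ≤ i → i ≤ p - 2 → DSVPReduced δ (block B (i * k + q + 1)) k)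

section Lemmas

open Submodule Finset

local notation "⟪" x ", " y "⟫" => @inner ℝ _ _ x y

variable {B : ℕ → Euc m}

lemma projGS_eq (B : ℕ → Euc m) (s : ℕ) (x : Euc m) :
    projGS B s x = x - orthogonalProjection (Submodule.span ℝ (B '' Set.Iio s)) x := by
  simp [projGS]

lemma projGS_mem_orthogonal (B : ℕ → Euc m) (s : ℕ) (x : Euc m) :
    projGS B s x ∈ (Submodule.span ℝ (B '' Set.Iio s))ᗮ := by
  rw [projGS_eq]
  exact Submodule.sub_starProjection_mem_orthogonal x

lemma sub_projGS_mem (B : ℕ → Euc m) (s : ℕ) (x : Euc m) :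
    x - projGS B s x ∈ Submodule.span ℝ (B '' Set.Iio s) := by
  rw [projGS_eq, sub_sub_cancel]
  exact Submodule.coe_mem _

lemma inner_projGS_of_mem {s : ℕ} {y : Euc m} (hy : y ∈ Submodule.span ℝ (B '' Set.Iio s))
    (x : Euc m) : ⟪y, projGS B s x⟫ = 0 :=
  (projGS_mem_orthogonal B s x) y hy

lemma gsoVec_mem_span (B : ℕ → Euc m) (i : ℕ) :
    gsoVec B i ∈ Submodule.span ℝ (B '' Set.Iio (i + 1)) := by
  have h1 : B i ∈ Submodule.span ℝ (B '' Set.Iio (i + 1)) :=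
    subset_span ⟨i, by simp, rfl⟩
  have h2 : B i - gsoVec B i ∈ Submodule.span ℝ (B '' Set.Iio i) :=
    sub_projGS_mem B i (B i)
  have h3 : Submodule.span ℝ (B '' Set.Iio i) ≤ Submodule.span ℝ (B '' Set.Iio (i + 1)) :=
    span_mono (Set.image_mono (fun a ha => lt_trans ha (Nat.lt_succ_self i)))
  have := Submodule.sub_mem _ h1 (h3 h2)
  simpa using this

lemma span_mono_nat {a b : ℕ} (hab : a ≤ b) :
    Submodule.span ℝ (B '' Set.Iio a) ≤ Submodule.span ℝ (B '' Set.Iio b) :=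
  span_mono (Set.image_mono (fun x hx => lt_of_lt_of_le hx hab))

lemma inner_gsoVec_of_lt {j i : ℕ} (h : j < i) : ⟪B j, gsoVec B i⟫ = 0 :=
  inner_projGS_of_mem (subset_span ⟨j, h, rfl⟩) (B i)

lemma inner_gsoVec_gsoVec {i j : ℕ} (h : i < j) : ⟪gsoVec B i, gsoVec B j⟫ = 0 :=
  inner_projGS_of_mem (span_mono_nat h (gsoVec_mem_span B i)) (B j)

lemma inner_self_gsoVec (B : ℕ → Euc m) (i : ℕ) : ⟪B i, gsoVec B i⟫ = ‖gsoVec B i‖ ^ 2 := by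
  have hw : ⟪B i - gsoVec B i, gsoVec B i⟫ = 0 :=
    inner_projGS_of_mem (sub_projGS_mem B i (B i)) (B i)
  have : ⟪B i, gsoVec B i⟫ = ⟪B i - gsoVec B i, gsoVec B i⟫ + ⟪gsoVec B i, gsoVec B i⟫ := by
    rw [← inner_add_left, sub_add_cancel]
  rw [this, hw, zero_add, real_inner_self_eq_norm_sq]

lemma gsoVec_zero (B : ℕ → Euc m) : gsoVec B 0 = B 0 := by
  have : (Submodule.span ℝ (B '' Set.Iio 0)) = ⊥ := by
    rw [show B '' Set.Iio 0 = ∅ by simp [Set.Iio, Nat.not_lt_zero], Submodule.span_empty]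
  rw [gsoVec, projGS_eq, this]
  simp

end Lemmas

section Lemmas2

open Submodule Finset

local notation "⟪" x ", " y "⟫" => @inner ℝ _ _ x y

variable {B : ℕ → Euc m}

lemma mem_orthogonal_span_of_forall {A : Set (Euc m)} {v : Euc m}
    (h : ∀ a ∈ A, ⟪a, v⟫ = 0) : v ∈ (Submodule.span ℝ A)ᗮ := by
  rw [Submodule.mem_orthogonal]
  intro u hu
  induction hu using Submodule.span_induction with
  | mem x hx => exact h x hx
  | zero => simp
  | add x y _ _ hx hy => rw [inner_add_left, hx, hy, add_zero]
  | smul c x _ hx => rw [inner_smul_left, hx, mul_zero]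

lemma span_le_span_gso (B : ℕ → Euc m) :
    ∀ ℓ : ℕ, Submodule.span ℝ (B '' Set.Iio ℓ) ≤ Submodule.span ℝ (gsoVec B '' Set.Iio ℓ) := by
  intro ℓ
  induction ℓ with
  | zero => rw [show (Set.Iio 0 : Set ℕ) = ∅ by simp [Set.Iio, Nat.not_lt_zero]]; simp
  | succ ℓ ih =>
    rw [Submodule.span_le]
    rintro x ⟨j, hj, rfl⟩
    have hjℓ : j ≤ ℓ := Nat.lt_succ_iff.mp hj
    have hdecomp : B j = gsoVec B j + (B j - gsoVec B j) := by abel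
    have h1 : gsoVec B j ∈ Submodule.span ℝ (gsoVec B '' Set.Iio (ℓ + 1)) :=
      subset_span ⟨j, hj, rfl⟩
    have h2 : (B j - gsoVec B j) ∈ Submodule.span ℝ (gsoVec B '' Set.Iio (ℓ + 1)) := by
      have hm : (B j - gsoVec B j) ∈ Submodule.span ℝ (B '' Set.Iio j) := sub_projGS_mem B j (B j)
      have : Submodule.span ℝ (B '' Set.Iio j) ≤ Submodule.span ℝ (B '' Set.Iio ℓ) :=
        span_mono_nat hjℓ
      exact (le_trans (le_trans this ih)
        (span_mono (Set.image_mono (fun a ha => lt_trans ha (Nat.lt_succ_self ℓ))))) (hm)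
    rw [hdecomp]
    exact Submodule.add_mem _ h1 h2

lemma gsoVec_ne_zero {n : ℕ} (hB : LinearIndependent ℝ (fun i : Fin n => B i))
    {i : ℕ} (hi : i < n) : gsoVec B i ≠ 0 := by
  intro h0
  have hmem : B i ∈ Submodule.span ℝ (B '' Set.Iio i) := by
    have := sub_projGS_mem B i (B i)
    rw [gsoVec] at h0
    rwa [h0, sub_zero] at this
  have himg : (fun j : Fin n => B j) '' {j : Fin n | (j : ℕ) < i} = B '' Set.Iio i := by
    ext x
    constructor
    · rintro ⟨j, hj, rfl⟩; exact ⟨j, hj, rfl⟩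
    · rintro ⟨j, hj, rfl⟩
      exact ⟨⟨j, lt_of_lt_of_le hj (le_of_lt hi)⟩, hj, rfl⟩
  have := hB.notMem_span_image (s := {j : Fin n | (j : ℕ) < i}) (x := ⟨i, hi⟩)
    (by simp)
  rw [himg] at this
  exact this hmem

end Lemmas2

section Lemmas3

open Submodule Finset

local notation "⟪" x ", " y "⟫" => @inner ℝ _ _ x y

variable {B : ℕ → Euc m}

lemma gso_expansion {ℓ i : ℕ} (hi : i < ℓ) :
    B i = ∑ j : Fin ℓ, ((⟪B i, gsoVec B j⟫ / ‖gsoVec B j‖ ^ 2) • gsoVec B (j : ℕ)) := by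
  set y := ∑ j : Fin ℓ, ((⟪B i, gsoVec B j⟫ / ‖gsoVec B j‖ ^ 2) • gsoVec B (j : ℕ)) with hy
  have horth : ∀ a ∈ gsoVec B '' Set.Iio ℓ, ⟪a, B i - y⟫ = 0 := by
    rintro a ⟨t, ht, rfl⟩
    have hsum : ⟪gsoVec B t, y⟫
        = ⟪B i, gsoVec B t⟫ / ‖gsoVec B t‖ ^ 2 * ⟪gsoVec B t, gsoVec B t⟫ := by
      rw [hy, inner_sum]
      rw [Finset.sum_eq_single (⟨t, ht⟩ : Fin ℓ)]
      · rw [real_inner_smul_right]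
      · intro b _ hb
        rw [real_inner_smul_right]
        have hbt : (b : ℕ) ≠ t := by
          intro hh; apply hb; apply Fin.ext; simpa using hh
        rcases Nat.lt_or_ge t b with h | h
        · rw [inner_gsoVec_gsoVec h, mul_zero]
        · have hbt' : (b : ℕ) < t := lt_of_le_of_ne h hbt
          rw [real_inner_comm (gsoVec B (b : ℕ)) (gsoVec B t), inner_gsoVec_gsoVec hbt',
            mul_zero]
      · intro hh; exact absurd (Finset.mem_univ _) hh
    rw [inner_sub_right, hsum]
    by_cases hz : gsoVec B t = 0
    · simp [hz]
    · rw [real_inner_self_eq_norm_sq, div_mul_cancel₀, real_inner_comm, sub_self]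
      have : ‖gsoVec B t‖ ≠ 0 := norm_ne_zero_iff.mpr hz
      positivity
  have hvmem : B i - y ∈ Submodule.span ℝ (gsoVec B '' Set.Iio ℓ) := by
    apply Submodule.sub_mem
    · exact span_le_span_gso B ℓ (subset_span ⟨i, hi, rfl⟩)
    · apply Submodule.sum_mem
      intro j _
      exact Submodule.smul_mem _ _ (subset_span ⟨(j : ℕ), j.2, rfl⟩)
  have hvorth : B i - y ∈ (Submodule.span ℝ (gsoVec B '' Set.Iio ℓ))ᗮ :=
    mem_orthogonal_span_of_forall horth
  have : B i - y = 0 := by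
    have hd := Submodule.orthogonal_disjoint (Submodule.span ℝ (gsoVec B '' Set.Iio ℓ))
    exact Submodule.disjoint_def.mp hd _ hvmem hvorth
  exact sub_eq_zero.mp this

lemma det_gram_eq_prod {ℓ : ℕ} (hne : ∀ i < ℓ, gsoVec B i ≠ 0) :
    (gram B ℓ).det = ∏ i : Fin ℓ, ‖gsoVec B i‖ ^ 2 := by
  classical
  set g := fun j : ℕ => gsoVec B j with hg
  set M : Matrix (Fin ℓ) (Fin ℓ) ℝ :=
    Matrix.of (fun i j : Fin ℓ => ⟪B (i : ℕ), g j⟫ / ‖g (j : ℕ)‖ ^ 2) with hM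
  have hnorm : ∀ j : Fin ℓ, ‖g (j : ℕ)‖ ^ 2 ≠ 0 := by
    intro j
    have := hne j j.2
    have : ‖g (j : ℕ)‖ ≠ 0 := norm_ne_zero_iff.mpr this
    positivity
  have hinner : ∀ i j : Fin ℓ, ⟪B (i : ℕ), g j⟫ = M i j * ‖g (j : ℕ)‖ ^ 2 := by
    intro i j
    rw [hM]
    simp only [Matrix.of_apply]
    rw [div_mul_cancel₀ _ (hnorm j)]
  have hfact : gram B ℓ = M * Matrix.diagonal (fun j : Fin ℓ => ‖g (j : ℕ)‖ ^ 2) * M.transpose := by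
    ext i j
    rw [Matrix.mul_apply]
    have : ∀ t : Fin ℓ, (M * Matrix.diagonal fun j : Fin ℓ => ‖g (j : ℕ)‖ ^ 2) i t
        = M i t * ‖g (t : ℕ)‖ ^ 2 := by
      intro t; rw [Matrix.mul_diagonal]
    simp only [this, Matrix.transpose_apply]
    show ⟪B (i : ℕ), B (j : ℕ)⟫ = _
    conv_lhs => rw [gso_expansion (B := B) j.2]
    rw [inner_sum]
    apply Finset.sum_congr rfl
    intro t _
    rw [real_inner_smul_right, hinner i t]
    show (⟪B (j : ℕ), g t⟫ / ‖g (t : ℕ)‖ ^ 2) * (M i t * ‖g (t : ℕ)‖ ^ 2) = _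
    rw [hM]
    simp only [Matrix.of_apply]
    ring
  have hMdet : M.det = 1 := by
    have htri : M.BlockTriangular OrderDual.toDual := by
      intro i j hij
      have hij' : (i : ℕ) < j := hij
      rw [hM]
      simp only [Matrix.of_apply]
      rw [inner_gsoVec_of_lt hij', zero_div]
    rw [Matrix.det_of_lowerTriangular M htri]
    have : ∀ i : Fin ℓ, M i i = 1 := by
      intro i
      rw [hM]
      simp only [Matrix.of_apply]
      rw [inner_self_gsoVec, div_self (hnorm i)]
    rw [Finset.prod_congr rfl (fun i _ => this i), Finset.prod_const_one]
  rw [hfact, Matrix.det_mul, Matrix.det_mul, Matrix.det_transpose, hMdet, one_mul, mul_one,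
    Matrix.det_diagonal]

lemma volB_eq_prod {ℓ : ℕ} (hne : ∀ i < ℓ, gsoVec B i ≠ 0) :
    volB B ℓ = ∏ i : Fin ℓ, ‖gsoVec B i‖ := by
  rw [volB, det_gram_eq_prod hne, Finset.prod_pow]
  exact Real.sqrt_sq (Finset.prod_nonneg fun i _ => norm_nonneg _)

lemma volB_pos {ℓ : ℕ} (hne : ∀ i < ℓ, gsoVec B i ≠ 0) : 0 < volB B ℓ := by
  rw [volB_eq_prod hne]
  exact Finset.prod_pos fun i _ => norm_pos_iff.mpr (hne i i.2)

lemma linearIndependent_of_det_gram_ne_zero {v : ℕ → Euc m} {ℓ : ℕ}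
    (h : (gram v ℓ).det ≠ 0) : LinearIndependent ℝ (fun i : Fin ℓ => v i) := by
  rw [Fintype.linearIndependent_iff]
  intro c hc
  have hmv : Matrix.mulVec (gram v ℓ) c = 0 := by
    funext i
    show ∑ j, gram v ℓ i j * c j = 0
    have : ∀ j : Fin ℓ, gram v ℓ i j * c j = ⟪v (i : ℕ), c j • v (j : ℕ)⟫ := by
      intro j
      rw [real_inner_smul_right, gram]
      simp only [Matrix.of_apply]
      ring
    rw [Finset.sum_congr rfl (fun j _ => this j), ← inner_sum, hc, inner_zero_right]
  have := congrArg (fun w => Matrix.mulVec (gram v ℓ)⁻¹ w) hmv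
  simp only [Matrix.mulVec_mulVec, Matrix.nonsing_inv_mul _ (Ne.isUnit h), Matrix.one_mulVec,
    Matrix.mulVec_zero] at this
  intro i
  exact congrFun this i

end Lemmas3

section Lemmas4

open Submodule Finset

local notation "⟪" x ", " y "⟫" => @inner ℝ _ _ x y

variable {B : ℕ → Euc m}

lemma block_apply_zero (B : ℕ → Euc m) (s : ℕ) : block B s 0 = gsoVec B s := rfl

lemma gsoVec_block (B : ℕ → Euc m) (s t : ℕ) :
    gsoVec (block B s) t = gsoVec B (s + t) := by
  classical
  set W := Submodule.span ℝ (B '' Set.Iio s) with hW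
  set U := Submodule.span ℝ (block B s '' Set.Iio t) with hU
  set V := Submodule.span ℝ (B '' Set.Iio (s + t)) with hV
  have hUW : U ≤ Wᗮ := by
    rw [hU, Submodule.span_le]
    rintro _ ⟨t', _, rfl⟩
    exact projGS_mem_orthogonal B s _
  have hWV : W ≤ V := span_mono_nat (Nat.le_add_right s t)
  have hUV : U ≤ V := by
    rw [hU, Submodule.span_le]
    rintro _ ⟨t', ht', rfl⟩
    have h1 : B (s + t') ∈ V := subset_span ⟨s + t', by simpa using ht', rfl⟩
    have h2 : B (s + t') - projGS B s (B (s + t')) ∈ W := sub_projGS_mem B s _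
    have : block B s t' = B (s + t') - (B (s + t') - projGS B s (B (s + t'))) := by
      rw [block]; abel
    rw [this]
    exact Submodule.sub_mem _ h1 (hWV h2)
  have hVWU : V ≤ W ⊔ U := by
    rw [hV, Submodule.span_le]
    rintro _ ⟨j, hj, rfl⟩
    rcases Nat.lt_or_ge j s with h | h
    · exact Submodule.mem_sup_left (subset_span ⟨j, h, rfl⟩)
    · obtain ⟨t', rfl⟩ := Nat.exists_eq_add_of_le h
      have hj' : s + t' < s + t := hj
      have ht' : t' < t := by omega
      have h2 : B (s + t') - projGS B s (B (s + t')) ∈ W := sub_projGS_mem B s _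
      have hu : block B s t' ∈ U := subset_span ⟨t', ht', rfl⟩
      have : B (s + t') = (B (s + t') - projGS B s (B (s + t'))) + block B s t' := by
        rw [block]; abel
      rw [this]
      exact Submodule.add_mem _ (Submodule.mem_sup_left h2) (Submodule.mem_sup_right hu)
  set b := B (s + t) with hb
  set x := (orthogonalProjection V b : Euc m) - (orthogonalProjection W b : Euc m) with hx
  have hxV : x ∈ V := Submodule.sub_mem _ (Submodule.coe_mem _) (hWV (Submodule.coe_mem _))
  have hxW : x ∈ Wᗮ := by
    rw [Submodule.mem_orthogonal]
    intro w hw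
    have h1 : ⟪w, b - (orthogonalProjection V b : Euc m)⟫ = 0 :=
      (Submodule.sub_starProjection_mem_orthogonal (K := V) b) w (hWV hw)
    have h2 : ⟪w, b - (orthogonalProjection W b : Euc m)⟫ = 0 :=
      (Submodule.sub_starProjection_mem_orthogonal (K := W) b) w hw
    have := sub_eq_zero.mpr (h2.trans h1.symm)
    rw [← inner_sub_right] at this
    convert this using 2
    rw [hx]; abel
  have hxU : x ∈ U := by
    obtain ⟨w, hw, u, hu, hwu⟩ := Submodule.mem_sup.mp (hVWU hxV)
    have hw0 : w = 0 := by
      have h1 : ⟪w, x⟫ = 0 := hxW w hw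
      have h2 : ⟪w, u⟫ = 0 := hUW hu w hw
      have : ⟪w, w⟫ = 0 := by
        have : ⟪w, w + u⟫ = ⟪w, w⟫ + ⟪w, u⟫ := inner_add_right w w u
        rw [hwu, h1, h2, add_zero] at this
        linarith
      exact inner_self_eq_zero.mp this
    rw [hw0, zero_add] at hwu
    rwa [← hwu]
  have hdecomp : block B s t = gsoVec B (s + t) + x := by
    rw [block, gsoVec, projGS_eq, projGS_eq, hx, ← hb, ← hV, ← hW]
    abel
  have hgmem : gsoVec B (s + t) ∈ Uᗮ := by
    have h1 : gsoVec B (s + t) ∈ Vᗮ := projGS_mem_orthogonal B (s + t) b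
    exact (Submodule.orthogonal_le hUV) h1
  have hxmem : x ∈ Uᗮᗮ := Submodule.le_orthogonal_orthogonal U hxU
  show (orthogonalProjection Uᗮ (block B s t) : Euc m) = gsoVec B (s + t)
  exact Submodule.eq_starProjection_of_mem_orthogonal' hgmem hxmem hdecomp

lemma gsoVec_block_ne {n s : ℕ} (hB : LinearIndependent ℝ (fun i : Fin n => B i))
    {ℓ : ℕ} (hsl : s + ℓ ≤ n) : ∀ t < ℓ, gsoVec (block B s) t ≠ 0 := by
  intro t ht
  rw [gsoVec_block]
  exact gsoVec_ne_zero hB (by omega)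

lemma volB_block {n s ℓ : ℕ} (hB : LinearIndependent ℝ (fun i : Fin n => B i))
    (hsl : s + ℓ ≤ n) :
    volB (block B s) ℓ = ∏ t : Fin ℓ, ‖gsoVec B (s + t)‖ := by
  rw [volB_eq_prod (gsoVec_block_ne hB hsl)]
  exact Finset.prod_congr rfl fun t _ => by rw [gsoVec_block]

lemma det_gram_block_pos {n s ℓ : ℕ} (hB : LinearIndependent ℝ (fun i : Fin n => B i))
    (hsl : s + ℓ ≤ n) : 0 < (gram (block B s) ℓ).det := by
  rw [det_gram_eq_prod (gsoVec_block_ne hB hsl)]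
  apply Finset.prod_pos
  intro t _
  have h1 := gsoVec_block_ne hB hsl t t.2
  have h2 : ‖gsoVec (block B s) (t : ℕ)‖ ≠ 0 := norm_ne_zero_iff.mpr h1
  exact pow_pos (lt_of_le_of_ne (norm_nonneg _) (Ne.symm h2)) 2

lemma block_linearIndependent {n s ℓ : ℕ} (hB : LinearIndependent ℝ (fun i : Fin n => B i))
    (hsl : s + ℓ ≤ n) : LinearIndependent ℝ (fun i : Fin ℓ => block B s i) :=
  linearIndependent_of_det_gram_ne_zero (ne_of_gt (det_gram_block_pos hB hsl))

end Lemmas4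

section Lemmas5

open Submodule Finset Matrix

local notation "⟪" x ", " y "⟫" => @inner ℝ _ _ x y

variable {v : ℕ → Euc m}

lemma dualFam_apply (v : ℕ → Euc m) (ℓ : ℕ) (i : Fin ℓ) :
    dualFam v ℓ (i : ℕ) = ∑ j : Fin ℓ, ((gram v ℓ)⁻¹ j i) • v (j : ℕ) := by
  rw [dualFam, dif_pos i.2]

lemma inner_dualFam {ℓ : ℕ} (hdet : (gram v ℓ).det ≠ 0) (a i : Fin ℓ) :
    ⟪v (a : ℕ), dualFam v ℓ (i : ℕ)⟫ = if a = i then 1 else 0 := by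
  rw [dualFam_apply, inner_sum]
  have : ∀ j : Fin ℓ, ⟪v (a : ℕ), ((gram v ℓ)⁻¹ j i) • v (j : ℕ)⟫
      = gram v ℓ a j * (gram v ℓ)⁻¹ j i := by
    intro j
    rw [real_inner_smul_right, _root_.gram]
    simp only [Matrix.of_apply]
    ring
  rw [Finset.sum_congr rfl (fun j _ => this j), ← Matrix.mul_apply,
    Matrix.mul_nonsing_inv _ (Ne.isUnit hdet), Matrix.one_apply]

lemma gram_dualFam {ℓ : ℕ} (hdet : (gram v ℓ).det ≠ 0) :
    gram (dualFam v ℓ) ℓ = ((gram v ℓ)⁻¹)ᵀ := by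
  ext i j
  show ⟪dualFam v ℓ (i : ℕ), dualFam v ℓ (j : ℕ)⟫ = (gram v ℓ)⁻¹ j i
  conv_lhs => rw [dualFam_apply]
  rw [sum_inner]
  have : ∀ a : Fin ℓ, ⟪((gram v ℓ)⁻¹ a i) • v (a : ℕ), dualFam v ℓ (j : ℕ)⟫
      = (gram v ℓ)⁻¹ a i * (if a = j then 1 else 0) := by
    intro a
    rw [real_inner_smul_left, inner_dualFam hdet]
  rw [Finset.sum_congr rfl (fun a _ => this a)]
  rw [Finset.sum_eq_single j]
  · simp
  · intro b _ hb; simp [hb]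
  · intro hh; exact absurd (Finset.mem_univ _) hh

lemma det_gram_dualFam {ℓ : ℕ} (hdet : (gram v ℓ).det ≠ 0) :
    (gram (dualFam v ℓ) ℓ).det = ((gram v ℓ).det)⁻¹ := by
  rw [gram_dualFam hdet, Matrix.det_transpose, Matrix.det_nonsing_inv]
  simp [Ring.inverse_eq_inv']

lemma gram_revDual {ℓ : ℕ} :
    gram (revDual v ℓ) ℓ = (gram (dualFam v ℓ) ℓ).submatrix Fin.revPerm Fin.revPerm := by
  ext i j
  show ⟪revDual v ℓ (i : ℕ), revDual v ℓ (j : ℕ)⟫ = _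
  rw [Matrix.submatrix_apply]
  show _ = ⟪dualFam v ℓ ((Fin.revPerm i : Fin ℓ) : ℕ), dualFam v ℓ ((Fin.revPerm j : Fin ℓ) : ℕ)⟫
  have hval : ∀ a : Fin ℓ, ((Fin.revPerm a : Fin ℓ) : ℕ) = ℓ - 1 - (a : ℕ) := by
    intro a
    show ((Fin.rev a : Fin ℓ) : ℕ) = ℓ - 1 - (a : ℕ)
    rw [Fin.val_rev]
    omega
  rw [hval i, hval j]
  rfl

lemma det_gram_revDual {ℓ : ℕ} (hdet : (gram v ℓ).det ≠ 0) :
    (gram (revDual v ℓ) ℓ).det = ((gram v ℓ).det)⁻¹ := by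
  rw [gram_revDual, Matrix.det_submatrix_equiv_self, det_gram_dualFam hdet]

lemma volB_revDual {ℓ : ℕ} (hdet : (gram v ℓ).det ≠ 0) :
    volB (revDual v ℓ) ℓ = (volB v ℓ)⁻¹ := by
  rw [volB, volB, det_gram_revDual hdet, Real.sqrt_inv]

lemma revDual_linearIndependent {ℓ : ℕ} (hdet : (gram v ℓ).det ≠ 0) :
    LinearIndependent ℝ (fun i : Fin ℓ => revDual v ℓ i) := by
  apply _root_.linearIndependent_of_det_gram_ne_zero
  rw [det_gram_revDual hdet]
  exact inv_ne_zero hdet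

lemma dualFam_last {ℓ : ℕ} (hℓ : 1 ≤ ℓ) (hdet : (gram v ℓ).det ≠ 0)
    (hne : ∀ i < ℓ, gsoVec v i ≠ 0) :
    dualFam v ℓ (ℓ - 1) = (‖gsoVec v (ℓ - 1)‖ ^ 2)⁻¹ • gsoVec v (ℓ - 1) := by
  classical
  set g := gsoVec v (ℓ - 1) with hg
  have hgne : g ≠ 0 := hne (ℓ - 1) (by omega)
  have hgnorm : ‖g‖ ^ 2 ≠ 0 := by
    have : ‖g‖ ≠ 0 := norm_ne_zero_iff.mpr hgne
    positivity
  set d := dualFam v ℓ (ℓ - 1) with hd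
  set e := (‖g‖ ^ 2)⁻¹ • g with he
  have hlast : ((⟨ℓ - 1, by omega⟩ : Fin ℓ) : ℕ) = ℓ - 1 := rfl
  have hinner : ∀ a : Fin ℓ, ⟪v (a : ℕ), d - e⟫ = 0 := by
    intro a
    rw [inner_sub_right]
    have h1 : ⟪v (a : ℕ), d⟫ = if a = (⟨ℓ - 1, by omega⟩ : Fin ℓ) then 1 else 0 :=
      inner_dualFam hdet a ⟨ℓ - 1, by omega⟩
    have h2 : ⟪v (a : ℕ), e⟫ = if a = (⟨ℓ - 1, by omega⟩ : Fin ℓ) then 1 else 0 := by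
      rw [he, real_inner_smul_right]
      by_cases hc : a = (⟨ℓ - 1, by omega⟩ : Fin ℓ)
      · rw [if_pos hc, hc]
        rw [show ⟪v ((⟨ℓ - 1, by omega⟩ : Fin ℓ) : ℕ), g⟫ = ‖g‖ ^ 2 from inner_self_gsoVec v _]
        rw [inv_mul_cancel₀ hgnorm]
      · rw [if_neg hc]
        have hlt : (a : ℕ) < ℓ - 1 := by
          have := a.2
          have hne' : (a : ℕ) ≠ ℓ - 1 := fun hh => hc (Fin.ext hh)
          omega
        rw [hg, inner_gsoVec_of_lt hlt, mul_zero]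
    rw [h1, h2, sub_self]
  have hmem : d - e ∈ Submodule.span ℝ (v '' Set.Iio ℓ) := by
    apply Submodule.sub_mem
    · rw [hd, show dualFam v ℓ (ℓ - 1) = ∑ j : Fin ℓ,
          ((gram v ℓ)⁻¹ j ⟨ℓ - 1, by omega⟩) • v (j : ℕ) from dualFam_apply v ℓ ⟨ℓ - 1, by omega⟩]
      apply Submodule.sum_mem
      intro j _
      exact Submodule.smul_mem _ _ (subset_span ⟨(j : ℕ), j.2, rfl⟩)
    · rw [he]
      apply Submodule.smul_mem
      have := gsoVec_mem_span v (ℓ - 1)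
      rwa [show ℓ - 1 + 1 = ℓ by omega] at this
  have horth : d - e ∈ (Submodule.span ℝ (v '' Set.Iio ℓ))ᗮ := by
    apply mem_orthogonal_span_of_forall
    rintro _ ⟨j, hj, rfl⟩
    exact hinner ⟨j, hj⟩
  have : d - e = 0 := by
    have hdj := Submodule.orthogonal_disjoint (Submodule.span ℝ (v '' Set.Iio ℓ))
    exact Submodule.disjoint_def.mp hdj _ hmem horth
  exact sub_eq_zero.mp this

lemma norm_revDual_zero {ℓ : ℕ} (hℓ : 1 ≤ ℓ) (hdet : (gram v ℓ).det ≠ 0)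
    (hne : ∀ i < ℓ, gsoVec v i ≠ 0) :
    ‖revDual v ℓ 0‖ = ‖gsoVec v (ℓ - 1)‖⁻¹ := by
  have h0 : revDual v ℓ 0 = dualFam v ℓ (ℓ - 1) := rfl
  rw [h0, dualFam_last hℓ hdet hne, norm_smul]
  have hgne : gsoVec v (ℓ - 1) ≠ 0 := hne (ℓ - 1) (by omega)
  have hpos : 0 < ‖gsoVec v (ℓ - 1)‖ := norm_pos_iff.mpr hgne
  rw [Real.norm_eq_abs, abs_of_pos (inv_pos.mpr (pow_pos hpos 2))]
  field_simp

end Lemmas5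

section Lemmas6

open Submodule Finset

local notation "⟪" x ", " y "⟫" => @inner ℝ _ _ x y

lemma log_le_of_le_mul_rpow {a cc P t : ℝ} (ha : 0 < a) (hc : 0 < cc) (hP : 0 < P)
    (h : a ≤ cc * P ^ t) : Real.log a ≤ Real.log cc + t * Real.log P := by
  have hrp : 0 < P ^ t := Real.rpow_pos_of_pos hP t
  have h2 := (Real.log_le_log_iff ha (mul_pos hc hrp)).mpr h
  rwa [Real.log_mul (ne_of_gt hc) (ne_of_gt hrp), Real.log_rpow hP] at h2

lemma le_mul_rpow_of_log_le {a cc P t : ℝ} (ha : 0 < a) (hc : 0 < cc) (hP : 0 < P)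
    (h : Real.log a ≤ Real.log cc + t * Real.log P) : a ≤ cc * P ^ t := by
  have hrp : 0 < P ^ t := Real.rpow_pos_of_pos hP t
  apply (Real.log_le_log_iff ha (mul_pos hc hrp)).mp
  rwa [Real.log_mul (ne_of_gt hc) (ne_of_gt hrp), Real.log_rpow hP]

lemma lambda1_nonneg (L : Submodule ℤ (Euc m)) : 0 ≤ lambda1 L := by
  apply Real.sInf_nonneg
  rintro r ⟨x, _, _, rfl⟩
  exact norm_nonneg x

lemma svp_hermite {v : ℕ → Euc m} {k : ℕ} {δ γ : ℝ} (hδ : 1 ≤ δ) (hγ : 1 ≤ γ)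
    (hH : IsHermiteBound γ k) (hli : LinearIndependent ℝ (fun i : Fin k => v i))
    (hsvp : SVPReduced δ v k) (hvol : 0 < volB v k) :
    ‖v 0‖ ≤ (δ * Real.sqrt γ) * volB v k ^ ((1 : ℝ) / (k : ℝ)) := by
  set L := lambda1 (latticeSpan v k) with hL
  have hL0 : 0 ≤ L := lambda1_nonneg _
  have hL2 : L ^ 2 ≤ γ * volB v k ^ ((2 : ℝ) / (k : ℝ)) := hH m v hli
  have hvk : volB v k ^ ((2 : ℝ) / (k : ℝ)) = (volB v k ^ ((1 : ℝ) / (k : ℝ))) ^ 2 := by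
    rw [← Real.rpow_natCast (volB v k ^ ((1 : ℝ) / (k : ℝ))) 2,
      ← Real.rpow_mul (le_of_lt hvol)]
    congr 1; ring
  have hγ0 : (0 : ℝ) ≤ γ := by linarith
  have hb0 : 0 ≤ Real.sqrt γ * volB v k ^ ((1 : ℝ) / (k : ℝ)) := by positivity
  have hLb : L ≤ Real.sqrt γ * volB v k ^ ((1 : ℝ) / (k : ℝ)) := by
    have h1 : L ^ 2 ≤ (Real.sqrt γ * volB v k ^ ((1 : ℝ) / (k : ℝ))) ^ 2 := by
      rw [mul_pow, Real.sq_sqrt hγ0, ← hvk]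
      exact hL2
    have h2 := Real.sqrt_le_sqrt h1
    rwa [Real.sqrt_sq hL0, Real.sqrt_sq hb0] at h2
  calc ‖v 0‖ ≤ δ * L := hsvp
    _ ≤ δ * (Real.sqrt γ * volB v k ^ ((1 : ℝ) / (k : ℝ))) :=
        mul_le_mul_of_nonneg_left hLb (by linarith)
    _ = (δ * Real.sqrt γ) * volB v k ^ ((1 : ℝ) / (k : ℝ)) := by ring

end Lemmas6

section Lemmas6b

open Submodule Finset

lemma log_volB_block {B : ℕ → Euc m} {n : ℕ} (hB : LinearIndependent ℝ (fun i : Fin n => B i))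
    {s0 ℓ : ℕ} (hsl : s0 + ℓ ≤ n) :
    Real.log (volB (block B s0) ℓ) = ∑ j ∈ Finset.range ℓ, Real.log ‖gsoVec B (s0 + j)‖ := by
  rw [volB_block hB hsl, Real.log_prod]
  · exact Fin.sum_univ_eq_sum_range (fun j => Real.log ‖gsoVec B (s0 + j)‖) ℓ
  · intro t _
    have ht := t.2
    exact ne_of_gt (norm_pos_iff.mpr (gsoVec_ne_zero hB (by omega)))

lemma log_volB_full {B : ℕ → Euc m} {n : ℕ} (hB : LinearIndependent ℝ (fun i : Fin n => B i)) :
    Real.log (volB B n) = ∑ j ∈ Finset.range n, Real.log ‖gsoVec B j‖ := by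
  rw [volB_eq_prod (fun i hi => gsoVec_ne_zero hB hi), Real.log_prod]
  · exact Fin.sum_univ_eq_sum_range (fun j => Real.log ‖gsoVec B j‖) n
  · intro t _
    exact ne_of_gt (norm_pos_iff.mpr (gsoVec_ne_zero hB t.2))

end Lemmas6b



open Finset

set_option maxHeartbeats 1000000

lemma sum_shift_one (X : ℕ → ℝ) (u k : ℕ) :
    ∑ j ∈ range k, X (u + 1 + j)
      = ∑ j ∈ range k, X (u + j) - X u + X (u + k) := by
  have h1 : ∑ j ∈ range k, X (u + 1 + j) = ∑ j ∈ range k, X (u + (j + 1)) :=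
    Finset.sum_congr rfl (fun j _ => by congr 1; omega)
  have h2 := Finset.sum_range_succ' (fun j => X (u + j)) k
  have h3 := Finset.sum_range_succ (fun j => X (u + j)) k
  simp only [Nat.add_zero] at h2
  rw [h1]
  have h4 : ∑ j ∈ range k, X (u + (j + 1)) = ∑ x ∈ range k, (fun j => X (u + j)) (x + 1) := rfl
  rw [h4]
  linarith [h2, h3]

lemma key_arith {k q p d n : ℕ} (hp : 2 ≤ p) (hk : 2 ≤ k) (hd : d = k + q)
    (hn : n = p * k + q) {X : ℕ → ℝ} {s : ℝ} (hs : 0 ≤ s)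
    (hA : X 0 ≤ (((d : ℝ) - 1) / (2 * ((k : ℝ) - 1))) * s + (1 / (d : ℝ)) * ∑ j ∈ range d, X j)
    (hB : (1 / (d : ℝ)) * (∑ j ∈ range d, X j - X 0 + X d)
        ≤ (((d : ℝ) - 1) / (2 * ((k : ℝ) - 1))) * s + X d)
    (hC : ∀ i, 1 ≤ i → i ≤ p - 1 →
        X (i * k + q) ≤ s / 2 + (1 / (k : ℝ)) * ∑ j ∈ range k, X (i * k + q + j))
    (hD : ∀ i, 1 ≤ i → i ≤ p - 2 →
        (1 / (k : ℝ)) * ∑ j ∈ range k, X (i * k + q + 1 + j) ≤ s / 2 + X ((i + 1) * k + q)) :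
    X 0 ≤ (((n : ℝ) - 1) / (2 * ((k : ℝ) - 1))) * s + (1 / (n : ℝ)) * ∑ j ∈ range n, X j := by
  have hkR : (2 : ℝ) ≤ (k : ℝ) := by exact_mod_cast hk
  have hk1 : (0 : ℝ) < (k : ℝ) - 1 := by linarith
  have hk0 : (0 : ℝ) < (k : ℝ) := by linarith
  have hd2 : 2 ≤ d := by omega
  have hdR : (2 : ℝ) ≤ (d : ℝ) := by exact_mod_cast hd2
  have hd0 : (0 : ℝ) < (d : ℝ) := by linarith
  have hd1 : (0 : ℝ) < (d : ℝ) - 1 := by linarith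
  set c : ℝ := s / ((k : ℝ) - 1) with hc
  have hc0 : 0 ≤ c := div_nonneg hs (le_of_lt hk1)
  have hsc : s = ((k : ℝ) - 1) * c := by rw [hc]; field_simp
  -- P0 : d * X 0 ≤ (d*(d-1)/2) * c + ∑_{j<d} X j
  have P0 : (d : ℝ) * X 0 ≤ ((d : ℝ) * ((d : ℝ) - 1) / 2) * c + ∑ j ∈ range d, X j := by
    have h1 := mul_le_mul_of_nonneg_left hA (le_of_lt hd0)
    have h2 : (d : ℝ) * ((((d : ℝ) - 1) / (2 * ((k : ℝ) - 1))) * s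
        + (1 / (d : ℝ)) * ∑ j ∈ range d, X j)
        = ((d : ℝ) * ((d : ℝ) - 1) / 2) * c + ∑ j ∈ range d, X j := by
      rw [hsc]; field_simp
    linarith [h1, h2.ge, h2.le]
  -- B' : ∑_{j<d} X j - X 0 ≤ (d*(d-1)/2) * c + (d-1) * X d
  have B' : ∑ j ∈ range d, X j - X 0 ≤ ((d : ℝ) * ((d : ℝ) - 1) / 2) * c
      + ((d : ℝ) - 1) * X d := by
    have h1 := mul_le_mul_of_nonneg_left hB (le_of_lt hd0)
    have h2 : (d : ℝ) * ((1 / (d : ℝ)) * (∑ j ∈ range d, X j - X 0 + X d))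
        = ∑ j ∈ range d, X j - X 0 + X d := by field_simp
    have h3 : (d : ℝ) * ((((d : ℝ) - 1) / (2 * ((k : ℝ) - 1))) * s + X d)
        = ((d : ℝ) * ((d : ℝ) - 1) / 2) * c + (d : ℝ) * X d := by
      rw [hsc]; field_simp
    linarith
  -- P1 : X 0 ≤ d * c + X d
  have P1 : X 0 ≤ (d : ℝ) * c + X d := by
    have h1 : ((d : ℝ) - 1) * X 0 ≤ (d : ℝ) * ((d : ℝ) - 1) * c + ((d : ℝ) - 1) * X d := by
      have e1 : (d : ℝ) * X 0 - X 0 = ((d : ℝ) - 1) * X 0 := by ring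
      linarith [P0, B']
    have h2 : ((d : ℝ) - 1) * ((d : ℝ) * c + X d)
        = (d : ℝ) * ((d : ℝ) - 1) * c + ((d : ℝ) - 1) * X d := by ring
    have h3 : ((d : ℝ) - 1) * X 0 ≤ ((d : ℝ) - 1) * ((d : ℝ) * c + X d) := by linarith
    exact (mul_le_mul_iff_right₀ hd1).mp h3
  -- C' : k * X (i*k+q) ≤ (k*(k-1)/2) * c + T i
  have C' : ∀ i, 1 ≤ i → i ≤ p - 1 →
      (k : ℝ) * X (i * k + q) ≤ ((k : ℝ) * ((k : ℝ) - 1) / 2) * c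
        + ∑ j ∈ range k, X (i * k + q + j) := by
    intro i h1 h2
    have h3 := mul_le_mul_of_nonneg_left (hC i h1 h2) (le_of_lt hk0)
    have h4 : (k : ℝ) * (s / 2 + (1 / (k : ℝ)) * ∑ j ∈ range k, X (i * k + q + j))
        = ((k : ℝ) * ((k : ℝ) - 1) / 2) * c + ∑ j ∈ range k, X (i * k + q + j) := by
      rw [hsc]; field_simp
    linarith
  -- P2 : X (i*k+q) ≤ k * c + X ((i+1)*k+q)
  have P2 : ∀ i, 1 ≤ i → i ≤ p - 2 →
      X (i * k + q) ≤ (k : ℝ) * c + X ((i + 1) * k + q) := by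
    intro i h1 h2
    have hC2 := C' i h1 (by omega)
    have hD2 := hD i h1 h2
    have hshift := sum_shift_one X (i * k + q) k
    have hik : i * k + q + k = (i + 1) * k + q := by ring
    rw [hshift, hik] at hD2
    have h3 := mul_le_mul_of_nonneg_left hD2 (le_of_lt hk0)
    have h4 : (k : ℝ) * ((1 / (k : ℝ)) * (∑ j ∈ range k, X (i * k + q + j)
        - X (i * k + q) + X ((i + 1) * k + q)))
        = ∑ j ∈ range k, X (i * k + q + j) - X (i * k + q) + X ((i + 1) * k + q) := by
      field_simp
    have h5 : (k : ℝ) * (s / 2 + X ((i + 1) * k + q))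
        = ((k : ℝ) * ((k : ℝ) - 1) / 2) * c + (k : ℝ) * X ((i + 1) * k + q) := by
      rw [hsc]; field_simp
    -- (k-1) * X(i*k+q) ≤ k*(k-1)*c + (k-1)*X((i+1)*k+q)
    have e1 : (k : ℝ) * X (i * k + q) - X (i * k + q) = ((k : ℝ) - 1) * X (i * k + q) := by
      ring
    have e2 : (k : ℝ) * X ((i + 1) * k + q) - X ((i + 1) * k + q)
        = ((k : ℝ) - 1) * X ((i + 1) * k + q) := by ring
    have h6 : ((k : ℝ) - 1) * X (i * k + q)
        ≤ (k : ℝ) * ((k : ℝ) - 1) * c + ((k : ℝ) - 1) * X ((i + 1) * k + q) := by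
      linarith
    have h7 : ((k : ℝ) - 1) * ((k : ℝ) * c + X ((i + 1) * k + q))
        = (k : ℝ) * ((k : ℝ) - 1) * c + ((k : ℝ) - 1) * X ((i + 1) * k + q) := by ring
    have h8 : ((k : ℝ) - 1) * X (i * k + q)
        ≤ ((k : ℝ) - 1) * ((k : ℝ) * c + X ((i + 1) * k + q)) := by linarith
    exact (mul_le_mul_iff_right₀ hk1).mp h8
  -- P3 : chain
  have P3 : ∀ i, 1 ≤ i → i ≤ p - 1 →
      X (k + q) ≤ (((i : ℝ) - 1) * (k : ℝ)) * c + X (i * k + q) := by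
    intro i
    induction i with
    | zero => intro h1 _; omega
    | succ i ih =>
      intro _ h2
      rcases Nat.eq_or_lt_of_le (show 1 ≤ i + 1 by omega) with h | h
      · have hi0 : i = 0 := by omega
        subst hi0
        simp
      · have hi1 : 1 ≤ i := by omega
        have h7 := ih hi1 (by omega)
        have h8 := P2 i hi1 (by omega)
        have h9 : ((((i : ℕ) + 1 : ℕ) : ℝ) - 1) * (k : ℝ) * c
            = ((i : ℝ) - 1) * (k : ℝ) * c + (k : ℝ) * c := by push_cast; ring
        push_cast at h9 ⊢
        linarith
  -- P4
  have P4 : ∀ t : ℕ, t + 1 ≤ p - 1 →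
      (k : ℝ) * X 0 ≤ ((k : ℝ) * ((d : ℝ) + (t : ℝ) * (k : ℝ))
        + (k : ℝ) * ((k : ℝ) - 1) / 2) * c + ∑ j ∈ range k, X ((t + 1) * k + q + j) := by
    intro t ht
    have h10 := P3 (t + 1) (by omega) ht
    have hXd : X d = X (k + q) := by rw [hd]
    have h11 : X 0 ≤ ((d : ℝ) + (t : ℝ) * (k : ℝ)) * c + X ((t + 1) * k + q) := by
      have hP1 := P1
      rw [hXd] at hP1
      have h12 : ((((t : ℕ) + 1 : ℕ) : ℝ) - 1) * (k : ℝ) * c = (t : ℝ) * (k : ℝ) * c := by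
        push_cast; ring
      push_cast at h10 h12
      have h13 : ((d : ℝ) + (t : ℝ) * (k : ℝ)) * c = (d : ℝ) * c + (t : ℝ) * (k : ℝ) * c := by
        ring
      linarith
    have h14 := C' (t + 1) (by omega) ht
    have h15 := mul_le_mul_of_nonneg_left h11 (le_of_lt hk0)
    have h16 : (k : ℝ) * (((d : ℝ) + (t : ℝ) * (k : ℝ)) * c + X ((t + 1) * k + q))
        = ((k : ℝ) * ((d : ℝ) + (t : ℝ) * (k : ℝ))) * c + (k : ℝ) * X ((t + 1) * k + q) := by
      ring
    have h17 : ((k : ℝ) * ((d : ℝ) + (t : ℝ) * (k : ℝ))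
        + (k : ℝ) * ((k : ℝ) - 1) / 2) * c
        = ((k : ℝ) * ((d : ℝ) + (t : ℝ) * (k : ℝ))) * c
          + ((k : ℝ) * ((k : ℝ) - 1) / 2) * c := by ring
    linarith
  -- main induction
  have main : ∀ t : ℕ, t ≤ p - 1 →
      ((d : ℝ) + (t : ℝ) * (k : ℝ)) * X 0
        ≤ (((d : ℝ) + (t : ℝ) * (k : ℝ)) * (((d : ℝ) + (t : ℝ) * (k : ℝ)) - 1) / 2) * c
          + ∑ j ∈ range (d + t * k), X j := by
    intro t
    induction t with
    | zero => intro _; simpa using P0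
    | succ t ih =>
      intro ht
      have h15 := ih (by omega)
      have h16 := P4 t (by omega)
      have hsplit : ∑ j ∈ range (d + (t + 1) * k), X j
          = ∑ j ∈ range (d + t * k), X j + ∑ j ∈ range k, X ((t + 1) * k + q + j) := by
        have h17 : d + (t + 1) * k = (d + t * k) + k := by ring
        rw [h17, Finset.sum_range_add]
        congr 1
        apply Finset.sum_congr rfl
        intro j _
        congr 1
        omega
      rw [hsplit]
      have hu : ((((t : ℕ) + 1 : ℕ) : ℝ)) = (t : ℝ) + 1 := by push_cast; ring
      push_cast [hu]
      have hcoeff : (((d : ℝ) + ((t : ℝ) + 1) * (k : ℝ))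
            * (((d : ℝ) + ((t : ℝ) + 1) * (k : ℝ)) - 1) / 2)
          = (((d : ℝ) + (t : ℝ) * (k : ℝ)) * (((d : ℝ) + (t : ℝ) * (k : ℝ)) - 1) / 2)
            + ((k : ℝ) * ((d : ℝ) + (t : ℝ) * (k : ℝ)) + (k : ℝ) * ((k : ℝ) - 1) / 2) := by
        ring
      have hsplitX : ((d : ℝ) + ((t : ℝ) + 1) * (k : ℝ)) * X 0
          = ((d : ℝ) + (t : ℝ) * (k : ℝ)) * X 0 + (k : ℝ) * X 0 := by ring
      have hcoeffc : (((d : ℝ) + ((t : ℝ) + 1) * (k : ℝ))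
            * (((d : ℝ) + ((t : ℝ) + 1) * (k : ℝ)) - 1) / 2) * c
          = (((d : ℝ) + (t : ℝ) * (k : ℝ)) * (((d : ℝ) + (t : ℝ) * (k : ℝ)) - 1) / 2) * c
            + ((k : ℝ) * ((d : ℝ) + (t : ℝ) * (k : ℝ)) + (k : ℝ) * ((k : ℝ) - 1) / 2) * c := by
        rw [hcoeff]; ring
      linarith
  -- conclude
  have hfin := main (p - 1) (le_refl _)
  have hnd : d + (p - 1) * k = n := by
    have h1 : (p - 1) * k = p * k - k := by
      cases p with
      | zero => omega
      | succ p' => simp [Nat.succ_sub_one, Nat.succ_mul]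
    have h2 : k ≤ p * k := Nat.le_mul_of_pos_left k (by omega)
    omega
  have hpR : ((p : ℝ) - 1) = (((p - 1 : ℕ) : ℕ) : ℝ) := by
    have : 1 ≤ p := by omega
    push_cast [Nat.cast_sub this]
    ring
  have hnR : (n : ℝ) = (d : ℝ) + (((p - 1 : ℕ) : ℕ) : ℝ) * (k : ℝ) := by
    rw [← hnd]
    push_cast
    ring
  rw [← hnR] at hfin
  rw [hnd] at hfin
  -- hfin : n * X 0 ≤ (n*(n-1)/2) * c + ∑_{j<n} X j
  have hn0 : (0 : ℝ) < (n : ℝ) := by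
    have : 0 < n := by omega
    exact_mod_cast this
  have hgoal : (((n : ℝ) - 1) / (2 * ((k : ℝ) - 1))) * s + (1 / (n : ℝ)) * ∑ j ∈ range n, X j
      = (1 / (n : ℝ)) * (((n : ℝ) * ((n : ℝ) - 1) / 2) * c + ∑ j ∈ range n, X j) := by
    rw [hsc]; field_simp
  rw [hgoal]
  have h18 := mul_le_mul_of_nonneg_left hfin (le_of_lt (one_div_pos.mpr hn0))
  have h19 : (1 / (n : ℝ)) * ((n : ℝ) * X 0) = X 0 := by field_simp
  linarith

/-- a `(δ,k)`-slide-reduced basis (case `n = pk + q ≥ 2k`) satisfies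
`‖b_1‖ ≤ (δ²γ_k)^{(n-1)/(2(k-1))} vol(L)^{1/n}`. -/
theorem slide_big_hsvp {m k q p n : ℕ} (hp : 2 ≤ p) (hk : 2 ≤ k) (hq : q ≤ k - 1)
    (hn : n = p * k + q) {δ γk : ℝ} (hδ : 1 ≤ δ) (hγk : 1 ≤ γk)
    (hHk : IsHermiteBound γk k)
    (B : ℕ → Euc m) (hB : LinearIndependent ℝ (fun i : Fin n => B i))
    (hslide : SlideReducedBig δ γk k q p B) :
    ‖B 0‖ ≤ (δ ^ 2 * γk) ^ (((n : ℝ) - 1) / (2 * ((k : ℝ) - 1))) * volB B n ^ ((1 : ℝ) / n) := by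
  classical
  obtain ⟨hsize, hA0, hB0, hC0, hD0⟩ := hslide
  have hkp : k ≤ p * k := Nat.le_mul_of_pos_left k (by omega)
  have h2k : 2 * k ≤ p * k := Nat.mul_le_mul_right k hp
  have hdn : k + q + 1 ≤ n := by omega
  have hn0 : 0 < n := by omega
  have hd2 : 2 ≤ k + q := by omega
  have hδ0 : (0 : ℝ) < δ := by linarith
  have hγ0 : (0 : ℝ) < γk := by linarith
  have hσ0 : (0 : ℝ) < δ ^ 2 * γk := by positivity
  have hσ1 : (1 : ℝ) ≤ δ ^ 2 * γk := by nlinarith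
  set s : ℝ := Real.log (δ ^ 2 * γk) with hsdef
  have hs : 0 ≤ s := Real.log_nonneg hσ1
  have hposn : ∀ i, i < n → 0 < ‖gsoVec B i‖ :=
    fun i hi => norm_pos_iff.mpr (gsoVec_ne_zero hB hi)
  set X : ℕ → ℝ := fun i => Real.log ‖gsoVec B i‖ with hXdef
  have hvolblk : ∀ s0 ℓ : ℕ, s0 + ℓ ≤ n → 0 < volB (block B s0) ℓ :=
    fun s0 ℓ hsl => volB_pos (gsoVec_block_ne hB hsl)
  have hηpos : (0 : ℝ) <
      (δ ^ 2 * γk) ^ (((k : ℝ) + (q : ℝ) - 1) / (2 * ((k : ℝ) - 1))) :=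
    Real.rpow_pos_of_pos hσ0 _
  have hloget : Real.log ((δ ^ 2 * γk) ^ (((k : ℝ) + (q : ℝ) - 1) / (2 * ((k : ℝ) - 1))))
      = ((((k + q : ℕ) : ℝ)) - 1) / (2 * ((k : ℝ) - 1)) * s := by
    rw [Real.log_rpow hσ0]
    push_cast
    ring
  have hlogc : Real.log (δ * Real.sqrt γk) = s / 2 := by
    have h1 : Real.log (δ ^ 2 * γk) = 2 * Real.log δ + Real.log γk := by
      rw [Real.log_mul (by positivity) (ne_of_gt hγ0), Real.log_pow]
      push_cast
      ring
    rw [Real.log_mul (ne_of_gt hδ0) (ne_of_gt (Real.sqrt_pos.mpr hγ0)),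
      Real.log_sqrt (le_of_lt hγ0), hsdef, h1]
    ring
  have hcpos : (0 : ℝ) < δ * Real.sqrt γk := by positivity
  -- Condition A
  have hAx : X 0 ≤ ((((k + q : ℕ) : ℝ)) - 1) / (2 * ((k : ℝ) - 1)) * s
      + (1 / ((k + q : ℕ) : ℝ)) * ∑ j ∈ Finset.range (k + q), X j := by
    have h1 : ‖gsoVec B 0‖ ≤ (δ ^ 2 * γk) ^ (((k : ℝ) + (q : ℝ) - 1) / (2 * ((k : ℝ) - 1)))
        * volB (block B 0) (k + q) ^ ((1 : ℝ) / ((k + q : ℕ) : ℝ)) := by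
      have := hA0
      rwa [HSVPReduced, block_apply_zero] at this
    have h2 := log_le_of_le_mul_rpow (hposn 0 (by omega)) hηpos
      (hvolblk 0 (k + q) (by omega)) h1
    rw [hloget, log_volB_block hB (show 0 + (k + q) ≤ n by omega)] at h2
    simp only [Nat.zero_add] at h2
    exact h2
  -- Condition B
  have hdetC : (gram (block B 1) (k + q)).det ≠ 0 :=
    ne_of_gt (det_gram_block_pos hB (show 1 + (k + q) ≤ n by omega))
  have hneC : ∀ i < k + q, gsoVec (block B 1) i ≠ 0 := gsoVec_block_ne hB (by omega)
  have hBx : (1 / ((k + q : ℕ) : ℝ)) * (∑ j ∈ Finset.range (k + q), X j - X 0 + X (k + q))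
      ≤ ((((k + q : ℕ) : ℝ)) - 1) / (2 * ((k : ℝ) - 1)) * s + X (k + q) := by
    have h1 : ‖revDual (block B 1) (k + q) 0‖
        ≤ (δ ^ 2 * γk) ^ (((k : ℝ) + (q : ℝ) - 1) / (2 * ((k : ℝ) - 1)))
          * volB (revDual (block B 1) (k + q)) (k + q) ^ ((1 : ℝ) / ((k + q : ℕ) : ℝ)) := hB0
    have hnrm : ‖revDual (block B 1) (k + q) 0‖ = ‖gsoVec B (k + q)‖⁻¹ := by
      rw [norm_revDual_zero (by omega) hdetC hneC, gsoVec_block]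
      have he : 1 + (k + q - 1) = k + q := by omega
      rw [he]
    have hvrd : volB (revDual (block B 1) (k + q)) (k + q) = (volB (block B 1) (k + q))⁻¹ :=
      volB_revDual hdetC
    rw [hnrm, hvrd] at h1
    have h2 := log_le_of_le_mul_rpow (inv_pos.mpr (hposn (k + q) (by omega))) hηpos
      (inv_pos.mpr (hvolblk 1 (k + q) (by omega))) h1
    rw [Real.log_inv, Real.log_inv, hloget,
      log_volB_block hB (show 1 + (k + q) ≤ n by omega)] at h2
    have hshift := sum_shift_one X 0 (k + q)
    simp only [Nat.zero_add] at hshift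
    rw [hshift] at h2
    have e3 : (1 / ((k + q : ℕ) : ℝ))
        * (-(∑ j ∈ Finset.range (k + q), X j - X 0 + X (k + q)))
        = -((1 / ((k + q : ℕ) : ℝ))
          * (∑ j ∈ Finset.range (k + q), X j - X 0 + X (k + q))) := by ring
    rw [e3] at h2
    linarith
  -- Condition C
  have hCx : ∀ i, 1 ≤ i → i ≤ p - 1 →
      X (i * k + q) ≤ s / 2 + (1 / (k : ℝ)) * ∑ j ∈ Finset.range k, X (i * k + q + j) := by
    intro i h1 h2
    have hik : i * k + k = (i + 1) * k := by ring
    have himul : (i + 1) * k ≤ p * k := Nat.mul_le_mul_right k (by omega)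
    have hsl : (i * k + q) + k ≤ n := by omega
    have hsvp := hC0 i h1 h2
    have hli := block_linearIndependent hB hsl
    have h3 := svp_hermite hδ hγk hHk hli hsvp (hvolblk _ k hsl)
    rw [block_apply_zero] at h3
    have h4 := log_le_of_le_mul_rpow (hposn _ (by omega)) hcpos (hvolblk _ k hsl) h3
    rw [hlogc, log_volB_block hB hsl] at h4
    calc X (i * k + q) ≤ s / 2 + 1 / (k : ℝ) * ∑ j ∈ Finset.range k, X (i * k + q + j) := h4
      _ = _ := by ring
  -- Condition D
  have hDx : ∀ i, 1 ≤ i → i ≤ p - 2 →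
      (1 / (k : ℝ)) * ∑ j ∈ Finset.range k, X (i * k + q + 1 + j)
        ≤ s / 2 + X ((i + 1) * k + q) := by
    intro i h1 h2
    have hik : i * k + k = (i + 1) * k := by ring
    have hik2 : (i + 1) * k + k = (i + 2) * k := by ring
    have himul : (i + 2) * k ≤ p * k := Nat.mul_le_mul_right k (by omega)
    have hsl : (i * k + q + 1) + k ≤ n := by omega
    have hdet1 : (gram (block B (i * k + q + 1)) k).det ≠ 0 :=
      ne_of_gt (det_gram_block_pos hB hsl)
    have hne1 : ∀ t < k, gsoVec (block B (i * k + q + 1)) t ≠ 0 := gsoVec_block_ne hB hsl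
    have hli := revDual_linearIndependent hdet1
    have hsvp := (hD0 i h1 h2).1
    have hvol1 := hvolblk (i * k + q + 1) k hsl
    have h3 := svp_hermite hδ hγk hHk hli hsvp
      (by rw [volB_revDual hdet1]; exact inv_pos.mpr hvol1)
    have hnrm : ‖revDual (block B (i * k + q + 1)) k 0‖ = ‖gsoVec B ((i + 1) * k + q)‖⁻¹ := by
      rw [norm_revDual_zero (by omega) hdet1 hne1, gsoVec_block]
      have he : i * k + q + 1 + (k - 1) = (i + 1) * k + q := by omega
      rw [he]
    rw [hnrm, volB_revDual hdet1] at h3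
    have h4 := log_le_of_le_mul_rpow (inv_pos.mpr (hposn _ (by omega))) hcpos
      (inv_pos.mpr hvol1) h3
    rw [Real.log_inv, Real.log_inv, hlogc, log_volB_block hB hsl] at h4
    have e3 : (1 / (k : ℝ)) * (-(∑ j ∈ Finset.range k, X (i * k + q + 1 + j)))
        = -((1 / (k : ℝ)) * ∑ j ∈ Finset.range k, X (i * k + q + 1 + j)) := by ring
    rw [e3] at h4
    linarith
  -- combine
  have hmain := key_arith (d := k + q) hp hk rfl hn hs hAx hBx hCx hDx
  have hB0n : ‖B 0‖ = ‖gsoVec B 0‖ := by rw [gsoVec_zero]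
  rw [hB0n]
  apply le_mul_rpow_of_log_le (hposn 0 (by omega)) (Real.rpow_pos_of_pos hσ0 _)
    (volB_pos (fun i hi => gsoVec_ne_zero hB hi))
  rw [Real.log_rpow hσ0, log_volB_full hB]
  calc Real.log ‖gsoVec B 0‖
      ≤ (((n : ℝ)) - 1) / (2 * ((k : ℝ) - 1)) * s
        + (1 / (n : ℝ)) * ∑ j ∈ Finset.range n, X j := hmain
    _ = ((n : ℝ) - 1) / (2 * ((k : ℝ) - 1)) * Real.log (δ ^ 2 * γk)
        + 1 / (n : ℝ) * ∑ j ∈ Finset.range n, Real.log ‖gsoVec B j‖ := by rw [hsdef]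

end
end
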